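/- Let x(t;θ) solve dx/dt = f(x) with x(0) = θ, and let C : ℝ^d → ℝ be continuously differentiable. If λ(t) solves the adjoint system dλ/dt = -(∇_x f(x(t;θ)))^T λ backwards from the final condition λ(T) = ∇_x C(x(T;θ)), then λ(0) = ∇_θ C(x(T;θ)), the gradient of the composed map θ ↦ C(x(T;θ)). -/

import Mathlib

open Matrix

open Set Metric Real Filter Topology

set_option linter.unusedSectionVars false
set_option linter.unusedVariables false
set_option maxHeartbeats 1000000

section AdjointAux

variable {E : Type*} [NormedAddCommGroup E] [NormedSpace ℝ E] [CompleteSpace E] [ProperSpace E]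

lemma flow_cont {F : ℝ → E} {g : E → E} (hF : ∀ t, HasDerivAt F (g (F t)) t) :
    Continuous F :=
  continuous_iff_continuousAt.2 fun t => (hF t).continuousAt

lemma flow_stay {F : ℝ → E} {g : E → E} (hg : Continuous g)
    (hF : ∀ t, HasDerivAt F (g (F t)) t)
    {p : E} {M : ℝ} (hM : ∀ z ∈ closedBall p 1, ‖g z‖ ≤ M)
    (hFp : dist (F 0) p ≤ 2⁻¹)
    {b : ℝ} (hb : (M + 1) * b ≤ 2⁻¹) :
    ∀ s ∈ Icc 0 b, ‖F s - F 0‖ ≤ (M + 1) * s := by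
  have hFc : Continuous F := flow_cont hF
  have hM0 : 0 ≤ M := le_trans (norm_nonneg _) (hM p (mem_closedBall_self zero_le_one))
  set S : Set ℝ := {s | ‖F s - F 0‖ ≤ (M + 1) * s} with hS
  have hclosed : IsClosed S := isClosed_le (by fun_prop) (by fun_prop)
  apply IsClosed.Icc_subset_of_forall_exists_gt (hclosed.inter isClosed_Icc)
  · simp [hS]
  · rintro x ⟨hxS, hx0, hxb⟩ y hy
    have hxS' : ‖F x - F 0‖ ≤ (M + 1) * x := hxS
    have hFx : F x ∈ closedBall p 1 := by
      have h1 : dist (F x) p ≤ ‖F x - F 0‖ + dist (F 0) p := by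
        rw [dist_eq_norm]
        calc ‖F x - p‖ ≤ ‖F x - F 0‖ + ‖F 0 - p‖ := norm_sub_le_norm_sub_add_norm_sub _ _ _
        _ = ‖F x - F 0‖ + dist (F 0) p := by rw [dist_eq_norm]
      have h2 : (M + 1) * x ≤ 2⁻¹ := le_trans (by nlinarith) hb
      simp only [mem_closedBall]
      linarith
    have hU : IsOpen {u : ℝ | ‖g (F u)‖ < M + 1} := isOpen_lt (by fun_prop) continuous_const
    have hxU : x ∈ {u : ℝ | ‖g (F u)‖ < M + 1} := lt_of_le_of_lt (hM _ hFx) (lt_add_one M)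
    obtain ⟨δ, hδ0, hδ⟩ := Metric.isOpen_iff.1 hU x hxU
    refine ⟨min y (x + δ / 2), ⟨?_, lt_min (mem_Ioi.1 hy) (by linarith), min_le_left _ _⟩⟩
    set z := min y (x + δ / 2) with hz
    have hxz : x < z := lt_min (mem_Ioi.1 hy) (by linarith)
    have hspeed : ∀ u ∈ uIoc x z, ‖g (F u)‖ ≤ M + 1 := by
      intro u hu
      rw [uIoc_of_le hxz.le] at hu
      have : dist u x < δ := by
        rw [Real.dist_eq, abs_of_pos (sub_pos.2 hu.1)]
        have : z ≤ x + δ / 2 := min_le_right _ _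
        linarith [hu.2]
      exact (hδ this).le
    have hint : F z - F x = ∫ u in x..z, g (F u) := by
      rw [intervalIntegral.integral_eq_sub_of_hasDerivAt (fun u _ => hF u)
        ((hg.comp hFc).intervalIntegrable x z)]
    have hnorm : ‖F z - F x‖ ≤ (M + 1) * (z - x) := by
      rw [hint]
      have := intervalIntegral.norm_integral_le_of_norm_le_const hspeed
      rwa [abs_of_nonneg (by linarith : (0:ℝ) ≤ z - x)] at this
    show ‖F z - F 0‖ ≤ (M + 1) * z
    calc ‖F z - F 0‖ ≤ ‖F z - F x‖ + ‖F x - F 0‖ := norm_sub_le_norm_sub_add_norm_sub _ _ _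
      _ ≤ (M + 1) * (z - x) + (M + 1) * x := add_le_add hnorm hxS'
      _ = (M + 1) * z := by ring

lemma flow_grow {F G : ℝ → E} {g : E → E}
    (hF : ∀ t, HasDerivAt F (g (F t)) t) (hG : ∀ t, HasDerivAt G (g (G t)) t)
    {K : Set E} {L : ℝ}
    (hLip : ∀ x ∈ K, ∀ y ∈ K, ‖g x - g y‖ ≤ L * ‖x - y‖)
    {b : ℝ} (hFK : ∀ t ∈ Icc (0:ℝ) b, F t ∈ K) (hGK : ∀ t ∈ Icc (0:ℝ) b, G t ∈ K) :
    ∀ t ∈ Icc (0:ℝ) b, ‖F t - G t‖ ≤ ‖F 0 - G 0‖ * exp (L * t) := by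
  intro t ht
  have h := norm_le_gronwallBound_of_norm_deriv_right_le (f := fun t => F t - G t)
    (f' := fun t => g (F t) - g (G t)) (δ := ‖F 0 - G 0‖) (K := L) (ε := 0) (a := 0) (b := b)
    (((flow_cont hF).sub (flow_cont hG)).continuousOn)
    (fun s _ => ((hF s).sub (hG s)).hasDerivWithinAt)
    le_rfl
    (fun s hs => by
      rw [add_zero]
      exact hLip _ (hFK s (Ico_subset_Icc_self hs)) _ (hGK s (Ico_subset_Icc_self hs)))
    t ht
  rwa [gronwallBound_ε0, sub_zero] at h

lemma flow_core {g : E → E} (hg : ContDiff ℝ 1 g)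
    {Y : ℝ → E → E}
    (hY0 : ∀ q, Y 0 q = q)
    (hYode : ∀ (q : E) (t : ℝ), HasDerivAt (fun s => Y s q) (g (Y t q)) t)
    (p : E) :
    ∀ ε > 0, ∃ δ > 0, ∀ s ∈ Icc (0:ℝ) δ, ∀ q : E, ‖q - p‖ ≤ δ →
      ‖Y s q - Y s p - (q - p) - s • (fderiv ℝ g p (q - p))‖ ≤ ε * s * ‖q - p‖ := by
  have hgc : Continuous g := hg.continuous
  have hgd : Differentiable ℝ g := hg.differentiable one_ne_zero
  have hDc : Continuous (fderiv ℝ g) := hg.continuous_fderiv one_ne_zero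
  obtain ⟨M, hM⟩ : ∃ M, ∀ z ∈ closedBall p 1, ‖g z‖ ≤ M :=
    (isCompact_closedBall p 1).exists_bound_of_continuousOn hgc.continuousOn
  have hM0 : 0 ≤ M := le_trans (norm_nonneg _) (hM p (mem_closedBall_self zero_le_one))
  obtain ⟨L, hL⟩ : ∃ L, ∀ z ∈ closedBall p 1, ‖fderiv ℝ g z‖ ≤ L :=
    (isCompact_closedBall p 1).exists_bound_of_continuousOn hDc.continuousOn
  have hL0 : 0 ≤ L := le_trans (norm_nonneg _) (hL p (mem_closedBall_self zero_le_one))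
  have hLip : ∀ x ∈ closedBall p 1, ∀ y ∈ closedBall p 1, ‖g x - g y‖ ≤ L * ‖x - y‖ :=
    fun x hx y hy =>
      Convex.norm_image_sub_le_of_norm_fderiv_le (fun z hz => hgd z) hL
        (convex_closedBall p 1) hy hx
  intro ε hε
  set C1 := ‖fderiv ℝ g p‖ with hC1
  have hC10 : 0 ≤ C1 := norm_nonneg _
  obtain ⟨ρ, hρ0, hρ⟩ := Metric.continuousAt_iff.1 (hDc.continuousAt (x := p)) (ε/6)
    (by linarith)
  set δ := min (min (2⁻¹ / (M + 1)) (1 / (L + 1)))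
      (min (ρ / (2 * (M + 2))) (ε / (6 * C1 * L + 2))) with hδdef
  have hδ0 : 0 < δ := by
    apply lt_min (lt_min (by positivity) (by positivity)) (lt_min (by positivity) (by positivity))
  have hδ1 : (M + 1) * δ ≤ 2⁻¹ := by
    have h1 : δ ≤ 2⁻¹ / (M + 1) := le_trans (min_le_left _ _) (min_le_left _ _)
    rw [le_div_iff₀ (by positivity)] at h1
    linarith
  have hδhalf : δ ≤ 2⁻¹ := by nlinarith
  have hδ2 : L * δ ≤ 1 := by
    have h1 : δ ≤ 1 / (L + 1) := le_trans (min_le_left _ _) (min_le_right _ _)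
    rw [le_div_iff₀ (by positivity)] at h1
    nlinarith
  have hδ3 : (M + 2) * δ ≤ ρ / 2 := by
    have h1 : δ ≤ ρ / (2 * (M + 2)) := le_trans (min_le_right _ _) (min_le_left _ _)
    rw [le_div_iff₀ (by positivity)] at h1
    linarith
  have hδ4 : 3 * C1 * L * δ ≤ ε / 2 := by
    have h1 : δ ≤ ε / (6 * C1 * L + 2) := le_trans (min_le_right _ _) (min_le_right _ _)
    rw [le_div_iff₀ (by positivity)] at h1
    nlinarith
  refine ⟨δ, hδ0, ?_⟩
  intro s hs q hq
  -- trajectories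
  have hstayq : ∀ r ∈ Icc (0:ℝ) δ, ‖Y r q - q‖ ≤ (M + 1) * r := by
    have := flow_stay hgc (hYode q) hM (by rw [hY0, dist_eq_norm]; exact le_trans hq hδhalf) hδ1
    intro r hr; have h := this r hr; rwa [hY0] at h
  have hstayp : ∀ r ∈ Icc (0:ℝ) δ, ‖Y r p - p‖ ≤ (M + 1) * r := by
    have := flow_stay hgc (hYode p) hM (by rw [hY0]; simp) hδ1
    intro r hr; have h := this r hr; rwa [hY0] at h
  have hballq : ∀ r ∈ Icc (0:ℝ) δ, Y r q ∈ closedBall p ((M + 2) * δ) := by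
    intro r hr
    have h1 : ‖Y r q - p‖ ≤ ‖Y r q - q‖ + ‖q - p‖ := norm_sub_le_norm_sub_add_norm_sub _ _ _
    have h2 : (M + 1) * r ≤ (M + 1) * δ := by
      have := hr.2; nlinarith [hr.1]
    simp only [mem_closedBall, dist_eq_norm]
    have := hstayq r hr
    nlinarith
  have hballp : ∀ r ∈ Icc (0:ℝ) δ, Y r p ∈ closedBall p ((M + 2) * δ) := by
    intro r hr
    have h1 := hstayp r hr
    have h2 : (M + 1) * r ≤ (M + 1) * δ := by have := hr.2; nlinarith [hr.1]
    simp only [mem_closedBall, dist_eq_norm]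
    nlinarith
  have hsub1 : closedBall p ((M + 2) * δ) ⊆ closedBall p 1 := by
    apply closedBall_subset_closedBall
    nlinarith
  have hsubρ : closedBall p ((M + 2) * δ) ⊆ closedBall p (ρ / 2) :=
    closedBall_subset_closedBall hδ3
  -- Gronwall
  have hgrow : ∀ r ∈ Icc (0:ℝ) δ, ‖Y r q - Y r p‖ ≤ 3 * ‖q - p‖ := by
    have h := flow_grow (hYode q) (hYode p) hLip
      (fun r hr => hsub1 (hballq r hr)) (fun r hr => hsub1 (hballp r hr))
    intro r hr
    have h1 := h r hr
    rw [hY0, hY0] at h1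
    have h2 : exp (L * r) ≤ 3 := by
      have : L * r ≤ 1 := by have := hr.2; nlinarith [hr.1]
      calc exp (L * r) ≤ exp 1 := exp_le_exp.2 this
        _ ≤ 3 := by have := exp_one_lt_d9; norm_num at this ⊢; linarith
    calc ‖Y r q - Y r p‖ ≤ ‖q - p‖ * exp (L * r) := h1
      _ ≤ ‖q - p‖ * 3 := by nlinarith [norm_nonneg (q - p)]
      _ = 3 * ‖q - p‖ := by ring
  -- integrand bound pieces: Δ r - (q - p)
  have hdiffbound : ∀ r ∈ Icc (0:ℝ) δ, ‖(Y r q - Y r p) - (q - p)‖ ≤ 3 * L * ‖q - p‖ * δ := by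
    intro r hr
    have hint : (Y r q - Y r p) - (Y 0 q - Y 0 p) = ∫ u in (0:ℝ)..r, (g (Y u q) - g (Y u p)) := by
      rw [intervalIntegral.integral_eq_sub_of_hasDerivAt
        (fun u _ => (hYode q u).sub (hYode p u))
        (((hgc.comp (flow_cont (hYode q))).sub (hgc.comp (flow_cont (hYode p)))).intervalIntegrable 0 r)]
      rfl
    rw [hY0, hY0] at hint
    rw [hint]
    have hb : ∀ u ∈ uIoc (0:ℝ) r, ‖g (Y u q) - g (Y u p)‖ ≤ 3 * L * ‖q - p‖ := by
      intro u hu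
      rw [uIoc_of_le hr.1] at hu
      have hu' : u ∈ Icc (0:ℝ) δ := ⟨hu.1.le, le_trans hu.2 hr.2⟩
      calc ‖g (Y u q) - g (Y u p)‖ ≤ L * ‖Y u q - Y u p‖ :=
            hLip _ (hsub1 (hballq u hu')) _ (hsub1 (hballp u hu'))
        _ ≤ L * (3 * ‖q - p‖) := by nlinarith [hgrow u hu', norm_nonneg (Y u q - Y u p)]
        _ = 3 * L * ‖q - p‖ := by ring
    have := intervalIntegral.norm_integral_le_of_norm_le_const hb
    rw [abs_of_nonneg (by linarith [hr.1] : (0:ℝ) ≤ r - 0)] at this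
    calc ‖∫ u in (0:ℝ)..r, (g (Y u q) - g (Y u p))‖ ≤ 3 * L * ‖q - p‖ * (r - 0) := this
      _ ≤ 3 * L * ‖q - p‖ * δ := by
          have h9 : (0:ℝ) ≤ 3 * L * ‖q - p‖ := by positivity
          nlinarith [hr.2, hr.1]
  -- MVT for g z - Dg p z on closedBall p (ρ/2)
  have hMVT : ∀ x ∈ closedBall p (ρ/2), ∀ y ∈ closedBall p (ρ/2),
      ‖g y - g x - fderiv ℝ g p (y - x)‖ ≤ ε / 6 * ‖y - x‖ := by
    intro x hx y hy
    have hd : ∀ z ∈ closedBall p (ρ/2), DifferentiableAt ℝ (fun z => g z - fderiv ℝ g p z) z :=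
      fun z _ => (hgd z).sub ((fderiv ℝ g p).differentiableAt)
    have hbd : ∀ z ∈ closedBall p (ρ/2), ‖fderiv ℝ (fun z => g z - fderiv ℝ g p z) z‖ ≤ ε / 6 := by
      intro z hz
      rw [fderiv_fun_sub (hgd z) ((fderiv ℝ g p).differentiableAt), (fderiv ℝ g p).fderiv]
      have hzρ : dist z p < ρ := lt_of_le_of_lt (mem_closedBall.1 hz) (by linarith)
      have := hρ hzρ
      rw [dist_eq_norm] at this
      exact this.le
    have := Convex.norm_image_sub_le_of_norm_fderiv_le hd hbd (convex_closedBall p (ρ/2)) hx hy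
    calc ‖g y - g x - fderiv ℝ g p (y - x)‖
        = ‖(g y - fderiv ℝ g p y) - (g x - fderiv ℝ g p x)‖ := by rw [map_sub]; congr 1; abel
      _ ≤ ε / 6 * ‖y - x‖ := this
  -- E and its derivative
  set D : E := fderiv ℝ g p (q - p) with hD
  have hEderiv : ∀ r : ℝ, HasDerivAt
      (fun r => Y r q - Y r p - (q - p) - r • D)
      (g (Y r q) - g (Y r p) - D) r := by
    intro r
    have h1 : HasDerivAt (fun r => Y r q - Y r p - (q - p)) (g (Y r q) - g (Y r p)) r :=
      ((hYode q r).sub (hYode p r)).sub_const _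
    have h2 : HasDerivAt (fun r : ℝ => r • D) D r := by
      simpa using (hasDerivAt_id r).smul_const D
    exact h1.sub h2
  have hEint : Y s q - Y s p - (q - p) - s • D = ∫ r in (0:ℝ)..s, (g (Y r q) - g (Y r p) - D) := by
    have := intervalIntegral.integral_eq_sub_of_hasDerivAt (fun r _ => hEderiv r)
      ((((hgc.comp (flow_cont (hYode q))).sub (hgc.comp (flow_cont (hYode p)))).sub
        continuous_const).intervalIntegrable 0 s)
    rw [this, hY0, hY0]
    simp
  have hbound : ∀ r ∈ uIoc (0:ℝ) s, ‖g (Y r q) - g (Y r p) - D‖ ≤ ε * ‖q - p‖ := by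
    intro r hr
    rw [uIoc_of_le hs.1] at hr
    have hr' : r ∈ Icc (0:ℝ) δ := ⟨hr.1.le, le_trans hr.2 hs.2⟩
    have hsplit : g (Y r q) - g (Y r p) - D =
        (g (Y r q) - g (Y r p) - fderiv ℝ g p (Y r q - Y r p)) +
        fderiv ℝ g p ((Y r q - Y r p) - (q - p)) := by
      simp only [hD, map_sub]
      abel
    rw [hsplit]
    have h1 : ‖g (Y r q) - g (Y r p) - fderiv ℝ g p (Y r q - Y r p)‖ ≤ ε / 6 * (3 * ‖q - p‖) := by
      have := hMVT _ (hsubρ (hballp r hr')) _ (hsubρ (hballq r hr'))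
      calc ‖g (Y r q) - g (Y r p) - fderiv ℝ g p (Y r q - Y r p)‖
          ≤ ε / 6 * ‖Y r q - Y r p‖ := this
        _ ≤ ε / 6 * (3 * ‖q - p‖) := by nlinarith [hgrow r hr', norm_nonneg (Y r q - Y r p)]
    have h2 : ‖fderiv ℝ g p ((Y r q - Y r p) - (q - p))‖ ≤ C1 * (3 * L * ‖q - p‖ * δ) := by
      calc ‖fderiv ℝ g p ((Y r q - Y r p) - (q - p))‖
          ≤ C1 * ‖(Y r q - Y r p) - (q - p)‖ := (fderiv ℝ g p).le_opNorm _
        _ ≤ C1 * (3 * L * ‖q - p‖ * δ) := by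
            nlinarith [hdiffbound r hr', norm_nonneg ((Y r q - Y r p) - (q - p))]
    calc ‖_ + _‖ ≤ ε / 6 * (3 * ‖q - p‖) + C1 * (3 * L * ‖q - p‖ * δ) :=
          le_trans (norm_add_le _ _) (add_le_add h1 h2)
      _ ≤ ε * ‖q - p‖ := by nlinarith [norm_nonneg (q - p)]
  rw [hEint]
  have := intervalIntegral.norm_integral_le_of_norm_le_const hbound
  rw [abs_of_nonneg (by linarith [hs.1] : (0:ℝ) ≤ s - 0)] at this
  calc ‖∫ r in (0:ℝ)..s, (g (Y r q) - g (Y r p) - D)‖ ≤ ε * ‖q - p‖ * (s - 0) := this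
    _ = ε * s * ‖q - p‖ := by ring

lemma flow_est {g : E → E} (hg : ContDiff ℝ 1 g) {Y : ℝ → E → E}
    (hY0 : ∀ q, Y 0 q = q)
    (hYode : ∀ (q : E) (t : ℝ), HasDerivAt (fun s => Y s q) (g (Y t q)) t)
    (hYdiff : ∀ t, Differentiable ℝ (fun q => Y t q))
    (p w : E) :
    ∀ ε > 0, ∃ δ > 0, ∀ s ∈ Icc (0:ℝ) δ,
      ‖fderiv ℝ (fun q => Y s q) p w - w - s • (fderiv ℝ g p w)‖ ≤ ε * s * (‖w‖ + 1) := by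
  intro ε hε
  obtain ⟨δ, hδ0, hδ⟩ := flow_core hg hY0 hYode p ε hε
  refine ⟨δ, hδ0, ?_⟩
  intro s hs
  have hAs : HasDerivAt (fun h : ℝ => Y s (p + h • w)) (fderiv ℝ (fun q => Y s q) p w) 0 := by
    have hinner : HasDerivAt (fun h : ℝ => p + h • w) w 0 := by
      simpa using ((hasDerivAt_id (0:ℝ)).smul_const w).const_add p
    have := ((hYdiff s) (p + (0:ℝ) • w)).hasFDerivAt.comp_hasDerivAt 0 hinner
    simpa [Function.comp_def] using this
  have hsl := hasDerivAt_iff_tendsto_slope.1 hAs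
  set A := fderiv ℝ (fun q => Y s q) p w with hA
  set b := w + s • (fderiv ℝ g p w) with hb
  have htends : Tendsto (fun h : ℝ => ‖slope (fun h : ℝ => Y s (p + h • w)) 0 h - b‖)
      (𝓝[≠] (0:ℝ)) (𝓝 ‖A - b‖) := (hsl.sub_const b).norm
  have hev : ∀ᶠ h in 𝓝[≠] (0:ℝ),
      ‖slope (fun h : ℝ => Y s (p + h • w)) 0 h - b‖ ≤ ε * s * (‖w‖ + 1) := by
    have hball : Metric.ball (0:ℝ) (δ / (‖w‖ + 1)) ∈ 𝓝 (0:ℝ) :=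
      ball_mem_nhds _ (by positivity)
    filter_upwards [nhdsWithin_le_nhds hball, self_mem_nhdsWithin] with h hmem hne
    have hne' : (h:ℝ) ≠ 0 := hne
    have hqp : ‖(p + h • w) - p‖ ≤ δ := by
      have h1 : |h| < δ / (‖w‖ + 1) := by simpa [Real.dist_eq] using hmem
      have h2 : ‖(p + h • w) - p‖ = |h| * ‖w‖ := by
        simp [norm_smul, abs_of_nonneg, Real.norm_eq_abs]
      rw [h2]
      have h3 : |h| * ‖w‖ ≤ |h| * (‖w‖ + 1) := by nlinarith [abs_nonneg h]
      have h4 : |h| * (‖w‖ + 1) < δ := by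
        rw [lt_div_iff₀ (by positivity)] at h1
        linarith
      linarith
    have hcore := hδ s hs (p + h • w) hqp
    have hslope : slope (fun h : ℝ => Y s (p + h • w)) 0 h - b =
        h⁻¹ • (Y s (p + h • w) - Y s p - ((p + h • w) - p) -
          s • (fderiv ℝ g p ((p + h • w) - p))) := by
      have e1 : (p + h • w) - p = h • w := by abel
      rw [slope_def_module]
      simp only [sub_zero, e1, _root_.map_smul, zero_smul, add_zero, hb]
      match_scalars <;> field_simp
    rw [hslope, norm_smul]
    have h2 : ‖(p + h • w) - p‖ = |h| * ‖w‖ := by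
      simp [norm_smul, Real.norm_eq_abs]
    calc ‖(h:ℝ)⁻¹‖ * ‖_‖ ≤ |h|⁻¹ * (ε * s * (|h| * ‖w‖)) := by
          rw [Real.norm_eq_abs, abs_inv]
          apply mul_le_mul_of_nonneg_left _ (by positivity)
          rw [← h2]; exact hcore
      _ = ε * s * ‖w‖ := by
          field_simp
      _ ≤ ε * s * (‖w‖ + 1) := by nlinarith [hs.1, norm_nonneg w, hε.le, mul_nonneg hε.le hs.1]
  have hfin : ‖A - b‖ ≤ ε * s * (‖w‖ + 1) := le_of_tendsto htends hev
  calc ‖A - w - s • (fderiv ℝ g p w)‖ = ‖A - b‖ := by rw [hb]; congr 1; abel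
    _ ≤ ε * s * (‖w‖ + 1) := hfin

lemma flow_key {g : E → E} (hg : ContDiff ℝ 1 g) {Y : ℝ → E → E}
    (hY0 : ∀ q, Y 0 q = q)
    (hYode : ∀ (q : E) (t : ℝ), HasDerivAt (fun s => Y s q) (g (Y t q)) t)
    (hYdiff : ∀ t, Differentiable ℝ (fun q => Y t q))
    (p w : E) :
    HasDerivAt (fun s => fderiv ℝ (fun q => Y s q) p w) (fderiv ℝ g p w) 0 := by
  rw [hasDerivAt_iff_isLittleO, Asymptotics.isLittleO_iff]
  intro c hc
  set ε := c / (‖w‖ + 1) with hεdef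
  have hε : 0 < ε := by positivity
  obtain ⟨δ1, hδ10, h1⟩ := flow_est hg hY0 hYode hYdiff p w ε hε
  set g' : E → E := fun x => -g x with hg'def
  set Y' : ℝ → E → E := fun t q => Y (-t) q with hY'def
  have hg' : ContDiff ℝ 1 g' := hg.neg
  have hY'0 : ∀ q, Y' 0 q = q := by intro q; simp only [hY'def, neg_zero]; exact hY0 q
  have hY'ode : ∀ (q : E) (t : ℝ), HasDerivAt (fun s => Y' s q) (g' (Y' t q)) t := by
    intro q t
    have h := (hYode q (-t)).scomp t (hasDerivAt_neg t)
    simpa [hY'def, hg'def, Function.comp_def] using h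
  have hY'diff : ∀ t, Differentiable ℝ (fun q => Y' t q) := fun t => hYdiff (-t)
  obtain ⟨δ2, hδ20, h2⟩ := flow_est hg' hY'0 hY'ode hY'diff p w ε hε
  have hDg' : fderiv ℝ g' p w = -(fderiv ℝ g p w) := by
    have h3 : fderiv ℝ g' p = -(fderiv ℝ g p) := by
      rw [hg'def, fderiv_fun_neg]
    rw [h3]; simp
  have hf0 : fderiv ℝ (fun q => Y (0:ℝ) q) p w = w := by
    have : (fun q => Y (0:ℝ) q) = id := funext hY0
    rw [this, fderiv_id]
    rfl
  have hball : Metric.ball (0:ℝ) (min δ1 δ2) ∈ 𝓝 (0:ℝ) := ball_mem_nhds _ (lt_min hδ10 hδ20)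
  filter_upwards [hball] with s hsmem
  have hsabs : |s| < min δ1 δ2 := by simpa [Real.dist_eq] using hsmem
  have hεw : ε * (‖w‖ + 1) = c := div_mul_cancel₀ c (by positivity)
  simp only [sub_zero, hf0]
  rcases le_or_gt 0 s with hs0 | hs0
  · have := h1 s ⟨hs0, le_trans (le_of_lt (by rwa [abs_of_nonneg hs0] at hsabs))
      (min_le_left _ _)⟩
    calc ‖fderiv ℝ (fun q => Y s q) p w - w - s • fderiv ℝ g p w‖
        ≤ ε * s * (‖w‖ + 1) := this
      _ = c * ‖s‖ := by rw [Real.norm_eq_abs, abs_of_nonneg hs0]; rw [← hεw]; ring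
  · have hts : -s ∈ Icc (0:ℝ) δ2 := by
      constructor
      · linarith
      · have : |s| < δ2 := lt_of_lt_of_le hsabs (min_le_right _ _)
        rw [abs_of_neg hs0] at this
        linarith
    have h4 := h2 (-s) hts
    have h5 : fderiv ℝ (fun q => Y' (-s) q) p w = fderiv ℝ (fun q => Y s q) p w := by
      simp [hY'def]
    rw [h5, hDg'] at h4
    have h6 : (-s) • -(fderiv ℝ g p w) = s • fderiv ℝ g p w := by
      rw [neg_smul, smul_neg, neg_neg]
    rw [h6] at h4
    calc ‖fderiv ℝ (fun q => Y s q) p w - w - s • fderiv ℝ g p w‖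
        ≤ ε * (-s) * (‖w‖ + 1) := h4
      _ = c * ‖s‖ := by rw [Real.norm_eq_abs, abs_of_neg hs0]; rw [← hεw]; ring

lemma flow_unique {g : E → E} (hg : ContDiff ℝ 1 g) {F G : ℝ → E}
    (hF : ∀ t, HasDerivAt F (g (F t)) t) (hG : ∀ t, HasDerivAt G (g (G t)) t)
    (h0 : F 0 = G 0) : ∀ t, F t = G t := by
  intro t
  set b := |t| + 1 with hbdef
  have hb : 0 < b := by positivity
  obtain ⟨R1, hR1⟩ := (isCompact_Icc (a := -b) (b := b)).exists_bound_of_continuousOn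
    (flow_cont hF).continuousOn
  obtain ⟨R2, hR2⟩ := (isCompact_Icc (a := -b) (b := b)).exists_bound_of_continuousOn
    (flow_cont hG).continuousOn
  set R := max (max R1 R2) 0 with hRdef
  have hR0 : 0 ≤ R := le_max_right _ _
  obtain ⟨L, hL⟩ : ∃ L, ∀ z ∈ closedBall (0:E) R, ‖fderiv ℝ g z‖ ≤ L :=
    (isCompact_closedBall (0:E) R).exists_bound_of_continuousOn
      (hg.continuous_fderiv one_ne_zero).continuousOn
  have hL0 : 0 ≤ L := le_trans (norm_nonneg _) (hL 0 (mem_closedBall_self hR0))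
  have hlip : LipschitzOnWith ⟨L, hL0⟩ g (closedBall (0:E) R) := by
    apply Convex.lipschitzOnWith_of_nnnorm_fderiv_le
      (fun z _ => (hg.differentiable one_ne_zero) z) _ (convex_closedBall _ _)
    intro z hz
    exact_mod_cast hL z hz
  have hFR : ∀ u ∈ Icc (-b) b, F u ∈ closedBall (0:E) R := by
    intro u hu
    simp only [mem_closedBall, dist_zero_right]
    exact le_trans (hR1 u hu) (le_trans (le_max_left _ _) (le_max_left _ _))
  have hGR : ∀ u ∈ Icc (-b) b, G u ∈ closedBall (0:E) R := by
    intro u hu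
    simp only [mem_closedBall, dist_zero_right]
    exact le_trans (hR2 u hu) (le_trans (le_max_right _ _) (le_max_left _ _))
  have key := ODE_solution_unique_of_mem_Icc (v := fun _ x => g x)
    (s := fun _ => closedBall (0:E) R) (K := ⟨L, hL0⟩) (t₀ := 0) (a := -b) (b := b)
    (fun _ _ => hlip)
    (by constructor <;> [linarith [abs_nonneg t]; linarith [abs_nonneg t]])
    (flow_cont hF).continuousOn
    (fun u _ => hF u)
    (fun u hu => hFR u (Ioo_subset_Icc_self hu))
    (flow_cont hG).continuousOn
    (fun u _ => hG u)
    (fun u hu => hGR u (Ioo_subset_Icc_self hu))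
    h0
  exact key ⟨by linarith [neg_abs_le t], by linarith [le_abs_self t]⟩

end AdjointAux

/-- If `x(t;θ)` solves `dx/dt = f(x)`, `x(0;θ) = θ`, and `λ` solves the adjoint
system `dλ/dt = -(∇f(x(t;θ)))ᵀ λ` backwards from `λ(T) = ∇_x C(x(T;θ))`, then
`λ(0) = ∇_θ C(x(T;θ))`, the gradient of `θ ↦ C(x(T;θ))`. -/
theorem adjoint_gives_gradient
    (d : ℕ) (T : ℝ) (hT : 0 ≤ T)
    (f : (Fin d → ℝ) → (Fin d → ℝ)) (hf : ContDiff ℝ 1 f)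
    (C : (Fin d → ℝ) → ℝ) (hC : ContDiff ℝ 1 C)
    (X : ℝ → (Fin d → ℝ) → (Fin d → ℝ))
    (hX0 : ∀ θ' : Fin d → ℝ, X 0 θ' = θ')
    (hXode : ∀ (θ' : Fin d → ℝ) (t : ℝ),
      HasDerivAt (fun s => X s θ') (f (X t θ')) t)
    (hXdiff : ∀ t : ℝ, Differentiable ℝ (fun θ' => X t θ'))
    (θ : Fin d → ℝ)
    (J : ℝ → Matrix (Fin d) (Fin d) ℝ)
    (hJ : ∀ t : ℝ, ∀ v : Fin d → ℝ, fderiv ℝ f (X t θ) v = (J t).mulVec v)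
    (lam : ℝ → (Fin d → ℝ))
    (hlamode : ∀ t : ℝ, HasDerivAt lam (-((J t)ᵀ.mulVec (lam t))) t)
    (gC : Fin d → ℝ)
    (hgC : ∀ v : Fin d → ℝ, fderiv ℝ C (X T θ) v = gC ⬝ᵥ v)
    (hlamT : lam T = gC) :
    ∀ v : Fin d → ℝ, fderiv ℝ (fun θ' => C (X T θ')) θ v = lam 0 ⬝ᵥ v := by
  intro v
  -- semigroup property
  have hsg : ∀ (t s : ℝ) (θ' : Fin d → ℝ), X (s + t) θ' = X s (X t θ') := by
    intro t s θ'
    have hFode : ∀ s : ℝ, HasDerivAt (fun r => X (r + t) θ') (f (X (s + t) θ')) s := by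
      intro s
      have h := (hXode θ' (s + t)).scomp s ((hasDerivAt_id s).add_const t)
      simpa [Function.comp_def] using h
    have hGode : ∀ s : ℝ, HasDerivAt (fun r => X r (X t θ')) (f (X s (X t θ'))) s :=
      fun s => hXode (X t θ') s
    have h0 : X ((0:ℝ) + t) θ' = X 0 (X t θ') := by rw [zero_add, hX0]
    exact flow_unique hf hFode hGode h0 s
  -- the Jacobian-vector product u
  set u : ℝ → (Fin d → ℝ) := fun t => fderiv ℝ (fun θ' => X t θ') θ v with hudef
  have hu : ∀ t : ℝ, HasDerivAt u ((J t).mulVec (u t)) t := by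
    intro t
    set p := X t θ with hp
    have key := flow_key hf hX0 hXode hXdiff p (u t)
    have hcomp : ∀ s : ℝ, u (s + t) = fderiv ℝ (fun q => X s q) p (u t) := by
      intro s
      have hfun : (fun θ' => X (s + t) θ') = (fun q => X s q) ∘ (fun θ' => X t θ') :=
        funext fun θ' => hsg t s θ'
      rw [hudef]
      simp only [hfun]
      rw [fderiv_comp θ ((hXdiff s) (X t θ)) ((hXdiff t) θ)]
      rfl
    have h1 : HasDerivAt (fun s => u (s + t)) (fderiv ℝ f p (u t)) 0 := by
      have hfun2 : (fun s => fderiv ℝ (fun q => X s q) p (u t)) = fun s => u (s + t) :=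
        funext fun s => (hcomp s).symm
      rwa [hfun2] at key
    have h2 : HasDerivAt u (fderiv ℝ f p (u t)) t := by
      have h1' : HasDerivAt (fun s => u (s + t)) (fderiv ℝ f p (u t)) (t + -t) := by
        simpa using h1
      have h3 := HasDerivAt.comp_add_const t (-t) h1'
      have hfun3 : (fun x => u (x + -t + t)) = u := by
        funext r; simp
      rwa [hfun3] at h3
    rwa [hJ t (u t)] at h2
  -- the invariant
  set φ : ℝ → ℝ := fun t => lam t ⬝ᵥ u t with hφdef
  have hφ : ∀ t : ℝ, HasDerivAt φ 0 t := by
    intro t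
    have hlam_i : ∀ i, HasDerivAt (fun t => lam t i) ((-((J t)ᵀ.mulVec (lam t))) i) t :=
      fun i => ((ContinuousLinearMap.proj (R := ℝ) (φ := fun _ : Fin d => ℝ) i).hasFDerivAt).comp_hasDerivAt t (hlamode t)
    have hu_i : ∀ i, HasDerivAt (fun t => u t i) (((J t).mulVec (u t)) i) t :=
      fun i => ((ContinuousLinearMap.proj (R := ℝ) (φ := fun _ : Fin d => ℝ) i).hasFDerivAt).comp_hasDerivAt t (hu t)
    have hsum : HasDerivAt (fun t => ∑ i, lam t i * u t i)
        (∑ i, ((-((J t)ᵀ.mulVec (lam t))) i * u t i + lam t i * ((J t).mulVec (u t)) i)) t :=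
      HasDerivAt.fun_sum fun i _ => (hlam_i i).mul (hu_i i)
    have hφeq : φ = fun t => ∑ i, lam t i * u t i := by
      funext r; simp [hφdef, dotProduct]
    rw [hφeq]
    convert hsum using 1
    have e1 : ∑ i, ((-((J t)ᵀ.mulVec (lam t))) i * u t i + lam t i * ((J t).mulVec (u t)) i)
        = -((J t)ᵀ.mulVec (lam t) ⬝ᵥ u t) + lam t ⬝ᵥ (J t).mulVec (u t) := by
      rw [Finset.sum_add_distrib]
      simp [dotProduct, Finset.sum_neg_distrib]
    rw [e1, Matrix.mulVec_transpose, ← Matrix.dotProduct_mulVec]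
    ring
  have hconst : φ 0 = φ T := by
    have hφd : Differentiable ℝ φ := fun t => (hφ t).differentiableAt
    exact is_const_of_deriv_eq_zero hφd (fun t => (hφ t).deriv) 0 T
  -- endpoints
  have hu0 : u 0 = v := by
    rw [hudef]
    have : (fun θ' => X 0 θ') = id := funext hX0
    simp only [this, fderiv_id]
    rfl
  have hchain : fderiv ℝ (fun θ' => C (X T θ')) θ v = fderiv ℝ C (X T θ) (u T) := by
    have hfun : (fun θ' => C (X T θ')) = C ∘ (fun θ' => X T θ') := rfl
    rw [hfun, fderiv_comp θ ((hC.differentiable one_ne_zero) (X T θ)) ((hXdiff T) θ)]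
    rfl
  rw [hchain, hgC (u T), ← hlamT]
  have : lam T ⬝ᵥ u T = φ T := rfl
  rw [this, ← hconst]
  rw [hφdef]
  simp only [hu0]
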